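/- Let M be a {0,1}-valued network matrix with n rows, and b ∈ ℤ^n. Then every extreme point (vertex) of the polyhedron {x ≥ 0 : Mx = b} is an integer vector. -/

import Mathlib

open SimpleGraph

variable {U : Type*}

/-- The underlying simple graph of a set of arcs. -/
def arcGraph [DecidableEq U] (A : Finset (U × U)) : SimpleGraph U where
  Adj u v := u ≠ v ∧ ((u, v) ∈ A ∨ (v, u) ∈ A)
  symm := ⟨fun _ _ h => ⟨h.1.symm, h.2.symm⟩⟩
  loopless := ⟨fun _ h => h.1 rfl⟩

/-- `A` is a directed tree on `U`: its underlying undirected graph is a (spanning) tree,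
and arcs are loopless and not doubled. -/
def IsDirTree [DecidableEq U] (A : Finset (U × U)) : Prop :=
  (arcGraph A).IsTree ∧ ∀ p ∈ A, p.1 ≠ p.2 ∧ Prod.swap p ∉ A

/-- The list of (oriented) arcs traversed by a walk. -/
def dartProds [DecidableEq U] {A : Finset (U × U)} {u v : U}
    (p : (arcGraph A).Walk u v) : List (U × U) :=
  p.darts.map SimpleGraph.Dart.toProd

/-- `M` is the network matrix of the digraph with arc set `Arcs` w.r.t. the directed
tree with arc set `A₀`: the entry `(f, a)` is `1`/`-1`/`0` according as the tree arc `f`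
is forward/backward/absent on the unique tree path between the endpoints of `a`. -/
def IsNetworkMatrix [DecidableEq U] (A₀ Arcs : Finset (U × U))
    (M : (U × U) → (U × U) → ℝ) : Prop :=
  ∀ f ∈ A₀, ∀ a ∈ Arcs, ∀ p : (arcGraph A₀).Walk a.1 a.2, p.IsPath →
    M f a = if f ∈ dartProds p then 1 else if Prod.swap f ∈ dartProds p then -1 else 0

private lemma walk_tele {V : Type*} {G : SimpleGraph V} (ψ : V → ℝ) {u v : V} (p : G.Walk u v) :
    (p.darts.map (fun d => ψ d.toProd.2 - ψ d.toProd.1)).sum = ψ v - ψ u := by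
  induction p with
  | nil => simp
  | cons h q ih => simp [ih]

private lemma isInt_sum {ι : Type*} (s : Finset ι) (f : ι → ℝ)
    (h : ∀ i ∈ s, ∃ k : ℤ, f i = (k : ℝ)) : ∃ k : ℤ, ∑ i ∈ s, f i = (k : ℝ) := by
  classical
  induction s using Finset.induction_on with
  | empty => exact ⟨0, by simp⟩
  | insert a s hni ih =>
    obtain ⟨k, hk⟩ := h a (Finset.mem_insert_self a s)
    obtain ⟨m, hm⟩ := ih (fun i hi => h i (Finset.mem_insert_of_mem hi))
    exact ⟨k + m, by rw [Finset.sum_insert hni, hk, hm]; push_cast; ring⟩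

private lemma path_package [DecidableEq U]
    (A₀ Arcs : Finset (U × U)) (hA₀ : IsDirTree A₀)
    (M : (U × U) → (U × U) → ℝ) (hM : IsNetworkMatrix A₀ Arcs M)
    (hM01 : ∀ f a, M f a = 0 ∨ M f a = 1)
    {a : U × U} (ha : a ∈ Arcs) :
    ∃ p : (arcGraph A₀).Walk a.1 a.2,
      (∀ d ∈ p.darts, d.toProd ∈ A₀) ∧ (dartProds p).Nodup ∧
      (∀ f ∈ A₀, M f a = if f ∈ dartProds p then 1 else 0) := by
  obtain ⟨q⟩ := hA₀.1.isConnected.preconnected a.1 a.2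
  set p := q.toPath.val with hpdef
  have hip : p.IsPath := q.toPath.property
  have hedges : p.edges.Nodup := hip.isTrail.edges_nodup
  have hdarts : p.darts.Nodup :=
    SimpleGraph.Walk.darts_nodup_of_support_nodup hip.support_nodup
  have hns : ∀ f : U × U, f.1 ≠ f.2 → f ∈ dartProds p → Prod.swap f ∈ dartProds p → False := by
    intro f hne h1 h2
    obtain ⟨d1, hd1, hd1e⟩ := List.mem_map.mp h1
    obtain ⟨d2, hd2, hd2e⟩ := List.mem_map.mp h2
    have hinj := List.inj_on_of_nodup_map (f := SimpleGraph.Dart.edge) (l := p.darts)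
      (by rw [← SimpleGraph.Walk.edges]; exact hedges)
    have hd12 : d1 = d2 := by
      refine hinj hd1 hd2 ?_
      show s(d1.toProd.1, d1.toProd.2) = s(d2.toProd.1, d2.toProd.2)
      rw [hd1e, hd2e]
      obtain ⟨f1, f2⟩ := f
      exact Sym2.eq_swap
    have hff : f = Prod.swap f := by
      have h := congrArg SimpleGraph.Dart.toProd hd12
      rw [hd1e, hd2e] at h
      exact h
    exact hne (congrArg Prod.fst hff)
  have hfwd : ∀ d ∈ p.darts, d.toProd ∈ A₀ := by
    intro d hd
    have hadj : d.toProd.1 ≠ d.toProd.2 ∧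
        ((d.toProd.1, d.toProd.2) ∈ A₀ ∨ (d.toProd.2, d.toProd.1) ∈ A₀) := d.adj
    rcases hadj.2 with h | h
    · exact h
    · exfalso
      set f : U × U := Prod.swap d.toProd with hf
      have hfA : f ∈ A₀ := h
      have hfne := (hA₀.2 f hfA).1
      have hswapmem : Prod.swap f ∈ dartProds p := by
        have : Prod.swap f = d.toProd := by simp [hf]
        rw [this]
        exact List.mem_map.mpr ⟨d, hd, rfl⟩
      have hfnot : f ∉ dartProds p := fun hmem => hns f hfne hmem hswapmem
      have hval := hM f hfA a ha p hip
      rw [if_neg hfnot, if_pos hswapmem] at hval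
      rcases hM01 f a with h0 | h0 <;> rw [hval] at h0 <;> norm_num at h0
  refine ⟨p, hfwd, List.Nodup.map SimpleGraph.Dart.toProd_injective hdarts, ?_⟩
  intro f hf
  have hsw : Prod.swap f ∉ dartProds p := by
    intro hmem
    obtain ⟨d, hd, hde⟩ := List.mem_map.mp hmem
    have hmem2 : d.toProd ∈ A₀ := hfwd d hd
    rw [hde] at hmem2
    exact (hA₀.2 f hf).2 hmem2
  rw [hM f hf a ha p hip, if_neg hsw]

private lemma sum_grad_mul [DecidableEq U]
    (A₀ : Finset (U × U)) (Mcol : (U × U) → ℝ) {u v : U}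
    (p : (arcGraph A₀).Walk u v)
    (hfwd : ∀ d ∈ p.darts, d.toProd ∈ A₀) (hnd : (dartProds p).Nodup)
    (hMval : ∀ f ∈ A₀, Mcol f = if f ∈ dartProds p then 1 else 0)
    (ψ : U → ℝ) :
    ∑ f ∈ A₀, (ψ f.2 - ψ f.1) * Mcol f = ψ v - ψ u := by
  classical
  have h1 : ∀ f ∈ A₀, (ψ f.2 - ψ f.1) * Mcol f =
      if f ∈ dartProds p then ψ f.2 - ψ f.1 else 0 := by
    intro f hf; rw [hMval f hf]; split <;> simp
  rw [Finset.sum_congr rfl h1, ← Finset.sum_filter]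
  have h2 : A₀.filter (fun f => f ∈ dartProds p) = (dartProds p).toFinset := by
    ext f
    simp only [Finset.mem_filter, List.mem_toFinset]
    constructor
    · exact fun h => h.2
    · intro h
      obtain ⟨d, hd, hde⟩ := List.mem_map.mp h
      exact ⟨hde ▸ hfwd d hd, h⟩
  rw [h2, List.sum_toFinset _ hnd, dartProds, List.map_map]
  exact walk_tele ψ p

private lemma cut_potential [DecidableEq U]
    (A₀ : Finset (U × U)) (hA₀ : IsDirTree A₀) {f : U × U} (hf : f ∈ A₀) :
    ∃ φ : U → ℝ, ∀ f' ∈ A₀, φ f'.2 - φ f'.1 = if f' = f then 1 else 0 := by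
  classical
  obtain ⟨f1, f2⟩ := f
  set G' := arcGraph (A₀.erase (f1, f2)) with hG'
  have hadjf : (arcGraph A₀).Adj f1 f2 := ⟨(hA₀.2 _ hf).1, Or.inl hf⟩
  have hbridge : (arcGraph A₀).IsBridge s(f1, f2) :=
    isAcyclic_iff_forall_adj_isBridge.mp hA₀.1.IsAcyclic hadjf
  have hnr : ¬((arcGraph A₀) \ fromEdgeSet {s(f1, f2)}).Reachable f1 f2 :=
    isBridge_iff.mp hbridge
  have hle : G' ≤ (arcGraph A₀) \ fromEdgeSet {s(f1, f2)} := by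
    intro u v huv
    obtain ⟨hne, hor⟩ := huv
    have hA : (arcGraph A₀).Adj u v := by
      refine ⟨hne, ?_⟩
      rcases hor with h | h
      · exact Or.inl (Finset.mem_of_mem_erase h)
      · exact Or.inr (Finset.mem_of_mem_erase h)
    refine ⟨hA, ?_⟩
    intro hcon
    rw [fromEdgeSet_adj] at hcon
    obtain ⟨hmem, -⟩ := hcon
    rw [Set.mem_singleton_iff, Sym2.eq_iff] at hmem
    rcases hor with h | h
    · rcases hmem with ⟨h1, h2⟩ | ⟨h1, h2⟩
      · subst h1; subst h2; exact Finset.ne_of_mem_erase h rfl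
      · subst h1; subst h2; exact (hA₀.2 _ hf).2 (Finset.mem_of_mem_erase h)
    · rcases hmem with ⟨h1, h2⟩ | ⟨h1, h2⟩
      · subst h1; subst h2; exact (hA₀.2 _ hf).2 (Finset.mem_of_mem_erase h)
      · subst h1; subst h2; exact Finset.ne_of_mem_erase h rfl
  have hbr : ¬ G'.Reachable f1 f2 := fun h => hnr (h.mono hle)
  refine ⟨fun u => if G'.Reachable u f2 then 1 else 0, ?_⟩
  intro f' hf'
  by_cases hEq : f' = (f1, f2)
  · subst hEq
    simp [hbr, Reachable.refl]
  · have hadj' : G'.Adj f'.1 f'.2 :=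
      ⟨(hA₀.2 f' hf').1, Or.inl (Finset.mem_erase.mpr ⟨hEq, hf'⟩)⟩
    have hiff : G'.Reachable f'.2 f2 ↔ G'.Reachable f'.1 f2 :=
      ⟨fun h => (hadj'.reachable).trans h, fun h => (hadj'.symm.reachable).trans h⟩
    by_cases h2 : G'.Reachable f'.2 f2
    · have h1 := hiff.mp h2
      simp [hEq, h2, h1]
    · have h1 : ¬ G'.Reachable f'.1 f2 := fun h => h2 (hiff.mpr h)
      simp [hEq, h2, h1]

/-- Every extreme point of `{x ≥ 0 : Mx = b}` for a `{0,1}`-valued network matrix `M`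
and integral right-hand side `b` is an integer vector. -/
theorem network_polyhedron_extreme_point_integral [Fintype U] [DecidableEq U]
    (A₀ Arcs : Finset (U × U)) (hA₀ : IsDirTree A₀)
    (M : (U × U) → (U × U) → ℝ) (hM : IsNetworkMatrix A₀ Arcs M)
    (hM01 : ∀ f a, M f a = 0 ∨ M f a = 1)
    (b : (U × U) → ℤ)
    (P : ((U × U) → ℝ) → Prop)
    (hP : ∀ x, P x ↔ ((∀ a, 0 ≤ x a) ∧ (∀ a, a ∉ Arcs → x a = 0) ∧
      ∀ f ∈ A₀, ∑ a ∈ Arcs, M f a * x a = (b f : ℝ)))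
    (x : (U × U) → ℝ) (hx : P x)
    (hext : ∀ y z, P y → P z → x = (fun a => (y a + z a) / 2) → y = z) :
    ∀ a, ∃ k : ℤ, x a = (k : ℝ) := by
  classical
  by_contra hcon
  push_neg at hcon
  obtain ⟨a₀, ha₀⟩ := hcon
  rw [hP] at hx
  obtain ⟨hx0, hxA, hxb⟩ := hx
  set S : Finset (U × U) := Arcs.filter (fun a => ∀ k : ℤ, x a ≠ (k : ℝ)) with hSdef
  have hSsub : S ⊆ Arcs := Finset.filter_subset _ _
  have hSfrac : ∀ a ∈ S, ∀ k : ℤ, x a ≠ (k : ℝ) := fun a ha => (Finset.mem_filter.mp ha).2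
  have ha₀A : a₀ ∈ Arcs := by
    by_contra h
    exact ha₀ 0 (by simp [hxA a₀ h])
  have hSne : S.Nonempty := ⟨a₀, Finset.mem_filter.mpr ⟨ha₀A, ha₀⟩⟩
  have hpack := fun (a : U × U) (ha : a ∈ Arcs) => path_package A₀ Arcs hA₀ M hM hM01 ha
  choose p hfwd hnd hMval using hpack
  have hL1 : ∀ a (ha : a ∈ Arcs), ∀ ψ : U → ℝ,
      ∑ f ∈ A₀, (ψ f.2 - ψ f.1) * M f a = ψ a.2 - ψ a.1 :=
    fun a ha ψ => sum_grad_mul A₀ (fun f => M f a) (p a ha) (hfwd a ha) (hnd a ha) (hMval a ha) ψ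
  -- Claim 1: no vertex is incident to exactly one fractional arc.
  have hdiv : ∀ w : U,
      (S.filter (fun a => a.1 = w)).card + (S.filter (fun a => a.2 = w)).card ≠ 1 := by
    intro w hw
    set ψ : U → ℝ := fun u => -(if u = w then 1 else 0) with hψ
    have key : ∑ a ∈ Arcs, ((if a.1 = w then (1:ℝ) else 0) - (if a.2 = w then 1 else 0)) * x a
        = ∑ f ∈ A₀, ((if f.1 = w then (1:ℝ) else 0) - (if f.2 = w then 1 else 0)) * (b f : ℝ) := by
      have e1 : ∀ a ∈ Arcs,
          ((if a.1 = w then (1:ℝ) else 0) - (if a.2 = w then 1 else 0)) * x a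
          = (∑ f ∈ A₀, (ψ f.2 - ψ f.1) * M f a) * x a := by
        intro a ha
        rw [hL1 a ha ψ]
        simp only [hψ]
        ring_nf
      rw [Finset.sum_congr rfl e1]
      have e2 : ∑ a ∈ Arcs, (∑ f ∈ A₀, (ψ f.2 - ψ f.1) * M f a) * x a
          = ∑ f ∈ A₀, (ψ f.2 - ψ f.1) * (∑ a ∈ Arcs, M f a * x a) := by
        simp_rw [Finset.sum_mul, Finset.mul_sum, mul_assoc]
        exact Finset.sum_comm
      rw [e2]
      refine Finset.sum_congr rfl fun f hf => ?_
      rw [hxb f hf]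
      simp only [hψ]
      ring_nf
    have hIleft : ∃ k : ℤ, ∑ f ∈ A₀,
        ((if f.1 = w then (1:ℝ) else 0) - (if f.2 = w then 1 else 0)) * (b f : ℝ) = (k : ℝ) := by
      apply isInt_sum
      intro f hf
      refine ⟨((if f.1 = w then (1:ℤ) else 0) - (if f.2 = w then 1 else 0)) * b f, ?_⟩
      split_ifs <;> push_cast <;> ring
    have hsplit := Finset.sum_filter_add_sum_filter_not Arcs (fun a => ∀ k : ℤ, x a ≠ (k : ℝ))
      (fun a => ((if a.1 = w then (1:ℝ) else 0) - (if a.2 = w then 1 else 0)) * x a)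
    have hIright : ∃ k : ℤ, ∑ a ∈ Arcs.filter (fun a => ¬ ∀ k : ℤ, x a ≠ (k : ℝ)),
        ((if a.1 = w then (1:ℝ) else 0) - (if a.2 = w then 1 else 0)) * x a = (k : ℝ) := by
      apply isInt_sum
      intro a ha
      obtain ⟨haA, hna⟩ := Finset.mem_filter.mp ha
      push_neg at hna
      obtain ⟨k, hk⟩ := hna
      refine ⟨((if a.1 = w then (1:ℤ) else 0) - (if a.2 = w then 1 else 0)) * k, ?_⟩
      rw [hk]
      split_ifs <;> push_cast <;> ring
    have hSsum : ∑ a ∈ S, ((if a.1 = w then (1:ℝ) else 0) - (if a.2 = w then 1 else 0)) * x a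
        = (∑ a ∈ S.filter (fun a => a.1 = w), x a) - ∑ a ∈ S.filter (fun a => a.2 = w), x a := by
      simp_rw [sub_mul, Finset.sum_sub_distrib, ite_mul, one_mul, zero_mul, ← Finset.sum_filter]
    obtain ⟨kL, hkL⟩ := hIleft
    obtain ⟨kR, hkR⟩ := hIright
    have hcases : ((S.filter (fun a => a.1 = w)).card = 1 ∧ (S.filter (fun a => a.2 = w)).card = 0)
        ∨ ((S.filter (fun a => a.1 = w)).card = 0 ∧ (S.filter (fun a => a.2 = w)).card = 1) := by
      omega
    rcases hcases with ⟨hc1, hc2⟩ | ⟨hc1, hc2⟩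
    · obtain ⟨a₁, he⟩ := Finset.card_eq_one.mp hc1
      have he2 : S.filter (fun a => a.2 = w) = ∅ := Finset.card_eq_zero.mp hc2
      have ha₁S : a₁ ∈ S := by
        have : a₁ ∈ S.filter (fun a => a.1 = w) := he ▸ Finset.mem_singleton_self a₁
        exact (Finset.mem_filter.mp this).1
      have hval : x a₁ = (kL : ℝ) - (kR : ℝ) := by
        have := key
        rw [← hsplit] at this
        rw [hkR] at this
        rw [hkL] at this
        have hS' : Arcs.filter (fun a => ∀ k : ℤ, x a ≠ (k : ℝ)) = S := hSdef.symm
        rw [hS', hSsum, he, he2] at this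
        simp at this
        linarith
      exact hSfrac a₁ ha₁S (kL - kR) (by rw [hval]; push_cast; ring)
    · obtain ⟨a₁, he⟩ := Finset.card_eq_one.mp hc2
      have he2 : S.filter (fun a => a.1 = w) = ∅ := Finset.card_eq_zero.mp hc1
      have ha₁S : a₁ ∈ S := by
        have : a₁ ∈ S.filter (fun a => a.2 = w) := he ▸ Finset.mem_singleton_self a₁
        exact (Finset.mem_filter.mp this).1
      have hval : x a₁ = (kR : ℝ) - (kL : ℝ) := by
        have := key
        rw [← hsplit] at this
        rw [hkR] at this
        rw [hkL] at this
        have hS' : Arcs.filter (fun a => ∀ k : ℤ, x a ≠ (k : ℝ)) = S := hSdef.symm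
        rw [hS', hSsum, he, he2] at this
        simp at this
        linarith
      exact hSfrac a₁ ha₁S (kR - kL) (by rw [hval]; push_cast; ring)
  -- the set of touched vertices
  set deg : U → ℕ := fun w =>
    (S.filter (fun a => a.1 = w)).card + (S.filter (fun a => a.2 = w)).card with hdeg
  set V' : Finset U := Finset.univ.filter (fun w => 0 < deg w) with hV'
  have hV2 : ∀ w ∈ V', 2 ≤ deg w := by
    intro w hw
    have h1 := (Finset.mem_filter.mp hw).2
    have h2 := hdiv w
    simp only [hdeg] at h1 ⊢
    omega
  have hdegsum : ∑ w ∈ Finset.univ, deg w = S.card + S.card := by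
    simp only [hdeg]
    rw [Finset.sum_add_distrib]
    congr 1
    · exact (Finset.card_eq_sum_card_fiberwise
        (f := fun a : U × U => a.1) (fun a _ => Finset.mem_univ _)).symm
    · exact (Finset.card_eq_sum_card_fiberwise
        (f := fun a : U × U => a.2) (fun a _ => Finset.mem_univ _)).symm
  have hcardV : V'.card ≤ S.card := by
    have h2 : 2 * V'.card ≤ ∑ w ∈ V', deg w := by
      calc 2 * V'.card = ∑ _w ∈ V', 2 := by rw [Finset.sum_const, smul_eq_mul, mul_comm]
        _ ≤ _ := Finset.sum_le_sum hV2
    have h3 : ∑ w ∈ V', deg w ≤ ∑ w ∈ Finset.univ, deg w :=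
      Finset.sum_le_sum_of_subset (Finset.subset_univ _)
    omega
  obtain ⟨a₁, ha₁⟩ := hSne
  have hw₀ : a₁.1 ∈ V' := by
    rw [hV', Finset.mem_filter]
    refine ⟨Finset.mem_univ _, ?_⟩
    have hmem : a₁ ∈ S.filter (fun a => a.1 = a₁.1) := Finset.mem_filter.mpr ⟨ha₁, rfl⟩
    have hpos := Finset.card_pos.mpr ⟨a₁, hmem⟩
    exact lt_of_lt_of_le hpos (Nat.le_add_right _ _)
  set w₀ := a₁.1 with hw₀def
  set V'' := V'.erase w₀ with hV''
  have hcardV'' : V''.card = V'.card - 1 := Finset.card_erase_of_mem hw₀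
  have hV'pos : 0 < V'.card := Finset.card_pos.mpr ⟨w₀, hw₀⟩
  -- linear dependence of the incidence vectors
  have hdep : ¬ LinearIndependent ℝ (fun (a : {a // a ∈ S}) => fun (w : {w // w ∈ V''}) =>
      ((if (a : U × U).2 = (w : U) then (1:ℝ) else 0)
        - (if (a : U × U).1 = (w : U) then 1 else 0))) := by
    intro hli
    have hle2 := hli.fintype_card_le_finrank
    rw [Module.finrank_fintype_fun_eq_card] at hle2
    rw [Fintype.card_coe, Fintype.card_coe] at hle2
    omega
  obtain ⟨g, hg0, i₀, hgi₀⟩ := Fintype.not_linearIndependent_iff.mp hdep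
  set d : (U × U) → ℝ := fun a => if h : a ∈ S then g ⟨a, h⟩ else 0 with hd
  have hdS : ∀ a, d a ≠ 0 → a ∈ S := by
    intro a h
    by_contra hc
    rw [hd] at h
    simp [hc] at h
  have hdval : ∀ (i : {a // a ∈ S}), d (i : U × U) = g i := by
    intro i
    rw [hd]
    simp only [i.2, dif_pos]
  have hdne : d (i₀ : U × U) ≠ 0 := by rw [hdval i₀]; exact hgi₀
  -- the kernel property
  have hT : ∀ w : U, ∑ a ∈ S, d a *
      ((if a.2 = w then (1:ℝ) else 0) - (if a.1 = w then 1 else 0)) = 0 := by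
    have hTin : ∀ w (hw : w ∈ V''), ∑ a ∈ S, d a *
        ((if a.2 = w then (1:ℝ) else 0) - (if a.1 = w then 1 else 0)) = 0 := by
      intro w hw
      have h := congrFun hg0 ⟨w, hw⟩
      rw [Finset.sum_apply] at h
      simp only [Pi.smul_apply, smul_eq_mul, Pi.zero_apply] at h
      calc ∑ a ∈ S, d a * ((if a.2 = w then (1:ℝ) else 0) - (if a.1 = w then 1 else 0))
          = ∑ i : {a // a ∈ S}, d (i : U × U) *
              ((if (i : U × U).2 = w then (1:ℝ) else 0)
                - (if (i : U × U).1 = w then 1 else 0)) :=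
            (Finset.sum_coe_sort S (fun a => d a *
              ((if a.2 = w then (1:ℝ) else 0) - (if a.1 = w then 1 else 0)))).symm
        _ = ∑ i : {a // a ∈ S}, g i *
              ((if (i : U × U).2 = w then (1:ℝ) else 0)
                - (if (i : U × U).1 = w then 1 else 0)) :=
            Finset.sum_congr rfl fun i _ => by rw [hdval i]
        _ = 0 := h
    have hTout : ∀ w, w ∉ V' → ∑ a ∈ S, d a *
        ((if a.2 = w then (1:ℝ) else 0) - (if a.1 = w then 1 else 0)) = 0 := by
      intro w hwn
      refine Finset.sum_eq_zero fun a ha => ?_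
      have h1 : a.1 ≠ w := by
        intro he
        apply hwn
        rw [hV', Finset.mem_filter]
        refine ⟨Finset.mem_univ _, ?_⟩
        have hmem : a ∈ S.filter (fun a' => a'.1 = w) := Finset.mem_filter.mpr ⟨ha, he⟩
        have hpos := Finset.card_pos.mpr ⟨a, hmem⟩
        exact lt_of_lt_of_le hpos (Nat.le_add_right _ _)
      have h2 : a.2 ≠ w := by
        intro he
        apply hwn
        rw [hV', Finset.mem_filter]
        refine ⟨Finset.mem_univ _, ?_⟩
        have hmem : a ∈ S.filter (fun a' => a'.2 = w) := Finset.mem_filter.mpr ⟨ha, he⟩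
        have hpos := Finset.card_pos.mpr ⟨a, hmem⟩
        have : 0 < deg w := lt_of_lt_of_le hpos (Nat.le_add_left _ _)
        exact this
      rw [if_neg h1, if_neg h2]
      ring
    have hTtot : ∑ w ∈ Finset.univ, (∑ a ∈ S, d a *
        ((if a.2 = w then (1:ℝ) else 0) - (if a.1 = w then 1 else 0))) = 0 := by
      rw [Finset.sum_comm]
      refine Finset.sum_eq_zero fun a _ => ?_
      rw [← Finset.mul_sum]
      rw [Finset.sum_sub_distrib]
      rw [Finset.sum_ite_eq Finset.univ a.2 (fun _ => (1:ℝ)),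
        Finset.sum_ite_eq Finset.univ a.1 (fun _ => (1:ℝ))]
      simp
    intro w
    by_cases hww : w = w₀
    · have hrest : ∀ w' ∈ Finset.univ.erase w₀, ∑ a ∈ S, d a *
          ((if a.2 = w' then (1:ℝ) else 0) - (if a.1 = w' then 1 else 0)) = 0 := by
        intro w' hw'
        obtain ⟨hne, -⟩ := Finset.mem_erase.mp hw'
        by_cases hwV : w' ∈ V'
        · exact hTin w' (Finset.mem_erase.mpr ⟨hne, hwV⟩)
        · exact hTout w' hwV
      have h := hTtot
      rw [← Finset.add_sum_erase Finset.univ _ (Finset.mem_univ w₀)] at h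
      rw [Finset.sum_eq_zero hrest, add_zero] at h
      rw [hww]
      exact h
    · by_cases hwV : w ∈ V'
      · exact hTin w (Finset.mem_erase.mpr ⟨hww, hwV⟩)
      · exact hTout w hwV
  -- kernel property w.r.t. the matrix
  have hker : ∀ f ∈ A₀, ∑ a ∈ Arcs, M f a * d a = 0 := by
    intro f hf
    obtain ⟨φ, hφ⟩ := cut_potential A₀ hA₀ hf
    have hMcol : ∀ a ∈ Arcs, M f a = φ a.2 - φ a.1 := by
      intro a ha
      have h1 := hL1 a ha φ
      rw [Finset.sum_congr rfl (fun f' hf' => by rw [hφ f' hf'])] at h1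
      simp_rw [ite_mul, one_mul, zero_mul] at h1
      rw [Finset.sum_ite_eq' A₀ f (fun f' => M f' a), if_pos hf] at h1
      exact h1
    calc ∑ a ∈ Arcs, M f a * d a
        = ∑ a ∈ S, M f a * d a := by
          refine (Finset.sum_subset hSsub ?_).symm
          intro a ha haS
          have hz : d a = 0 := by
            by_contra h
            exact haS (hdS a h)
          rw [hz, mul_zero]
      _ = ∑ a ∈ S, d a * (∑ w ∈ Finset.univ, φ w *
            ((if a.2 = w then (1:ℝ) else 0) - (if a.1 = w then 1 else 0))) := by
          refine Finset.sum_congr rfl fun a ha => ?_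
          rw [hMcol a (hSsub ha)]
          have e2 : ∑ w ∈ Finset.univ, φ w *
              ((if a.2 = w then (1:ℝ) else 0) - (if a.1 = w then 1 else 0))
              = φ a.2 - φ a.1 := by
            simp_rw [mul_sub, Finset.sum_sub_distrib, mul_ite, mul_one, mul_zero]
            rw [Finset.sum_ite_eq Finset.univ a.2 φ, Finset.sum_ite_eq Finset.univ a.1 φ]
            simp
          rw [e2]
          ring
      _ = ∑ w ∈ Finset.univ, φ w * (∑ a ∈ S, d a *
            ((if a.2 = w then (1:ℝ) else 0) - (if a.1 = w then 1 else 0))) := by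
          simp_rw [Finset.mul_sum]
          rw [Finset.sum_comm]
          refine Finset.sum_congr rfl fun w _ => Finset.sum_congr rfl fun a _ => ?_
          ring
      _ = 0 := by
          refine Finset.sum_eq_zero fun w _ => ?_
          rw [hT w, mul_zero]
  -- the perturbation
  have hxpos : ∀ a ∈ S, 0 < x a := by
    intro a ha
    rcases lt_or_eq_of_le (hx0 a) with h | h
    · exact h
    · exact (hSfrac a ha 0 (by rw [← h]; simp)).elim
  have hSne' : S.Nonempty := ⟨a₁, ha₁⟩
  set m := S.inf' hSne' x with hm
  have hmpos : 0 < m := by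
    rw [hm, Finset.lt_inf'_iff]
    exact hxpos
  have hmle : ∀ a ∈ S, m ≤ x a := fun a ha => Finset.inf'_le x ha
  set c := 1 + ∑ a ∈ S, |d a| with hc
  have hsumnn : 0 ≤ ∑ a ∈ S, |d a| := Finset.sum_nonneg fun a _ => abs_nonneg _
  have hcpos : 0 < c := by rw [hc]; linarith
  set ε := m / c with hε
  have hεpos : 0 < ε := div_pos hmpos hcpos
  have hbound : ∀ a ∈ S, |ε * d a| ≤ m := by
    intro a ha
    rw [abs_mul, abs_of_pos hεpos]
    have h1 : |d a| ≤ c := by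
      rw [hc]
      have h2 := Finset.single_le_sum (f := fun a => |d a|) (fun a _ => abs_nonneg _) ha
      linarith
    calc ε * |d a| ≤ ε * c := mul_le_mul_of_nonneg_left h1 hεpos.le
      _ = m := by rw [hε]; field_simp
  have hd0 : ∀ a, a ∉ S → d a = 0 := by
    intro a ha
    by_contra h
    exact ha (hdS a h)
  have hPy : P (fun a => x a + ε * d a) := by
    rw [hP]
    refine ⟨?_, ?_, ?_⟩
    · intro a
      by_cases haS : a ∈ S
      · have h1 := abs_le.mp (hbound a haS)
        have h2 := hmle a haS
        linarith [h1.1]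
      · rw [hd0 a haS, mul_zero, add_zero]
        exact hx0 a
    · intro a ha
      rw [hd0 a (fun h => ha (hSsub h)), mul_zero, add_zero]
      exact hxA a ha
    · intro f hf
      have e : ∑ a ∈ Arcs, M f a * (x a + ε * d a)
          = (∑ a ∈ Arcs, M f a * x a) + ε * ∑ a ∈ Arcs, M f a * d a := by
        rw [Finset.mul_sum, ← Finset.sum_add_distrib]
        refine Finset.sum_congr rfl fun a _ => ?_
        ring
      rw [e, hxb f hf, hker f hf, mul_zero, add_zero]
  have hPz : P (fun a => x a - ε * d a) := by
    rw [hP]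
    refine ⟨?_, ?_, ?_⟩
    · intro a
      by_cases haS : a ∈ S
      · have h1 := abs_le.mp (hbound a haS)
        have h2 := hmle a haS
        linarith [h1.2]
      · rw [hd0 a haS, mul_zero, sub_zero]
        exact hx0 a
    · intro a ha
      rw [hd0 a (fun h => ha (hSsub h)), mul_zero, sub_zero]
      exact hxA a ha
    · intro f hf
      have e : ∑ a ∈ Arcs, M f a * (x a - ε * d a)
          = (∑ a ∈ Arcs, M f a * x a) - ε * ∑ a ∈ Arcs, M f a * d a := by
        rw [Finset.mul_sum, ← Finset.sum_sub_distrib]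
        refine Finset.sum_congr rfl fun a _ => ?_
        ring
      rw [e, hxb f hf, hker f hf, mul_zero, sub_zero]
  have hyz := hext _ _ hPy hPz (funext fun a => by ring)
  have heq : x (i₀ : U × U) + ε * d (i₀ : U × U) = x (i₀ : U × U) - ε * d (i₀ : U × U) :=
    congrFun hyz (i₀ : U × U)
  have hzero : d (i₀ : U × U) = 0 := by
    have hεd : ε * d (i₀ : U × U) = 0 := by linarith
    rcases mul_eq_zero.mp hεd with h | h
    · exact (hεpos.ne' h).elim
    · exact h
  exact hdne hzero
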